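/- There is an absolute constant c > 0 with the following property. Let κ ≥ 2 and ν ≥ 20κ be integers and let T be the Chebyshev polynomial for the Müntz space span{x^ν, x^{ν+1}, …, x^{ν+κ}} on [0,1] normalized so that T(1) = 1; that is, T(x) = x^ν Q(x) with Q a real polynomial of degree at most κ, ‖T‖_{[0,1]} = 1, and there exist points 1 = x_0 > x_1 > … > x_κ > 0 with T(x_j) = (−1)^j for j = 0, 1, …, κ. Then the Lebesgue measure of the set {x ∈ [0,1] : |T(x)| ≥ 1/2} is at least c·κ/ν. -/

import Mathlib

open Polynomial MeasureTheory Set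


lemma concaveOn_log_abs_sub {a : ℝ} {s : Set ℝ} (hconv : Convex ℝ s)
    (h : (∀ t ∈ s, a < t) ∨ (∀ t ∈ s, t < a)) :
    ConcaveOn ℝ s (fun t => Real.log |t - a|) := by
  refine ⟨hconv, fun x hx y hy p q hp hq hpq => ?_⟩
  have hmem : p • x + q • y ∈ s := hconv hx hy hp hq hpq
  rcases h with h | h
  · have h1 : (0:ℝ) < x - a := sub_pos.2 (h x hx)
    have h2 : (0:ℝ) < y - a := sub_pos.2 (h y hy)
    have h3 : (0:ℝ) < (p • x + q • y) - a := sub_pos.2 (h _ hmem)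
    have key := strictConcaveOn_log_Ioi.concaveOn.2 (mem_Ioi.2 h1) (mem_Ioi.2 h2) hp hq hpq
    simp only [smul_eq_mul] at *
    rw [abs_of_pos h1, abs_of_pos h2, abs_of_pos h3]
    have : p * x + q * y - a = p * (x - a) + q * (y - a) := by linear_combination a * hpq
    rw [this]
    exact key
  · have h1 : (0:ℝ) < a - x := sub_pos.2 (h x hx)
    have h2 : (0:ℝ) < a - y := sub_pos.2 (h y hy)
    have h3 : (0:ℝ) < a - (p • x + q • y) := sub_pos.2 (h _ hmem)
    have key := strictConcaveOn_log_Ioi.concaveOn.2 (mem_Ioi.2 h1) (mem_Ioi.2 h2) hp hq hpq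
    simp only [smul_eq_mul] at *
    rw [abs_sub_comm x a, abs_of_pos h1, abs_sub_comm y a, abs_of_pos h2,
      abs_sub_comm (p * x + q * y) a, abs_of_pos h3]
    have : a - (p * x + q * y) = p * (a - x) + q * (a - y) := by linear_combination (-a) * hpq
    rw [this]
    exact key

lemma concaveOn_finset_sum {ι : Type*} {s : Set ℝ} (hconv : Convex ℝ s) (F : Finset ι)
    (f : ι → ℝ → ℝ) (h : ∀ i ∈ F, ConcaveOn ℝ s (f i)) :
    ConcaveOn ℝ s (fun t => ∑ i ∈ F, f i t) := by
  classical
  induction F using Finset.induction_on with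
  | empty => simpa using concaveOn_const 0 hconv
  | insert _ _ hni ih =>
    rename_i a F'
    simp only [Finset.sum_insert hni]
    exact (h a (Finset.mem_insert_self a F')).add
      (ih fun i hi => h i (Finset.mem_insert_of_mem hi))

lemma concaveOn_icc_min_le {f : ℝ → ℝ} {a b : ℝ} (hab : a ≤ b)
    (hf : ConcaveOn ℝ (Set.Icc a b) f) {t : ℝ} (ht : t ∈ Set.Icc a b) :
    min (f a) (f b) ≤ f t := by
  obtain ⟨p, q, hp, hq, hpq, hx⟩ := (Convex.mem_Icc hab).1 ht
  have := hf.2 (left_mem_Icc.2 hab) (right_mem_Icc.2 hab) hp hq hpq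
  simp only [smul_eq_mul, hx] at this
  calc min (f a) (f b) = p * min (f a) (f b) + q * min (f a) (f b) := by
        rw [← add_mul, hpq, one_mul]
    _ ≤ p * f a + q * f b := by
        gcongr
        exacts [min_le_left _ _, min_le_right _ _]
    _ ≤ f t := this

lemma key_interval (ν κ j : ℕ) (lc : ℝ) (z : ℕ → ℝ) (T : Polynomial ℝ)
    (e1 e2 : ℝ) (hlc : 0 < lc)
    (heval : ∀ t : ℝ, T.eval t = t ^ ν * (lc * ∏ i ∈ Finset.range κ, (t - z i)))
    (hj : j < κ)
    (he1 : 0 < e1) (h1 : e1 < z j) (h2 : z j < e2)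
    (hsep : ∀ i < κ, i ≠ j → z i < e1 ∨ e2 < z i)
    (hTe1 : |T.eval e1| = 1) (hTe2 : |T.eval e2| = 1)
    {t : ℝ} (ht : t ∈ Set.Icc e1 e2)
    (htw : max (z j - e1) (e2 - z j) ≤ 2 * |t - z j|) :
    1/2 ≤ |T.eval t| := by
  classical
  set w := z j with hw
  set M := max (w - e1) (e2 - w) with hM
  have hMp : 0 < M := lt_max_of_lt_left (sub_pos.2 h1)
  have he12 : e1 ≤ e2 := le_of_lt (h1.trans h2)
  -- every point of Icc e1 e2 is positive
  have hpos : ∀ s ∈ Set.Icc e1 e2, (0:ℝ) < s := fun s hs => lt_of_lt_of_le he1 hs.1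
  -- nonvanishing of factors i ≠ j on Icc
  have hfac : ∀ i < κ, i ≠ j → ∀ s ∈ Set.Icc e1 e2, s - z i ≠ 0 := by
    intro i hi hij s hs
    rcases hsep i hi hij with h | h
    · exact ne_of_gt (sub_pos.2 (lt_of_lt_of_le h hs.1))
    · exact ne_of_lt (sub_neg.2 (lt_of_le_of_lt hs.2 h))
  -- the concave part
  set F : ℝ → ℝ := fun s => (ν : ℝ) * Real.log s + Real.log lc +
      ∑ i ∈ (Finset.range κ).erase j, Real.log |s - z i| with hF
  -- log |T.eval s| = F s + log |s - w| whenever s ∈ Icc, s ≠ w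
  have habs : ∀ s : ℝ, |T.eval s| = |s| ^ ν * (|lc| * ∏ i ∈ Finset.range κ, |s - z i|) := by
    intro s
    rw [heval s, abs_mul, abs_pow, abs_mul, Finset.abs_prod]
  have hlog : ∀ s ∈ Set.Icc e1 e2, s ≠ w → Real.log |T.eval s| = F s + Real.log |s - w| := by
    intro s hs hsw
    have hsp := hpos s hs
    have hne : ∀ i ∈ Finset.range κ, s - z i ≠ 0 := by
      intro i hi
      rcases eq_or_ne i j with rfl | hij
      · exact sub_ne_zero.2 hsw
      · exact hfac i (Finset.mem_range.1 hi) hij s hs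
    have hprodne : (∏ i ∈ Finset.range κ, |s - z i|) ≠ 0 :=
      Finset.prod_ne_zero_iff.2 fun i hi => abs_ne_zero.2 (hne i hi)
    have hlcne : |lc| ≠ 0 := abs_ne_zero.2 (ne_of_gt hlc)
    rw [habs s, Real.log_mul (by positivity) (mul_ne_zero hlcne hprodne),
        Real.log_mul hlcne hprodne, Real.log_pow,
        Real.log_prod (fun i hi => abs_ne_zero.2 (hne i hi)),
        abs_of_pos hsp, abs_of_pos hlc]
    rw [← Finset.sum_erase_add (Finset.range κ) _ (Finset.mem_range.2 hj)]
    ring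
  -- F is concave on Icc e1 e2
  have hFconc : ConcaveOn ℝ (Set.Icc e1 e2) F := by
    have c1 : ConcaveOn ℝ (Set.Icc e1 e2) (fun s => (ν : ℝ) * Real.log s) := by
      have := (strictConcaveOn_log_Ioi.concaveOn.subset
        (fun s hs => mem_Ioi.2 (hpos s hs)) (convex_Icc _ _)).smul (by positivity : (0:ℝ) ≤ ν)
      simpa [smul_eq_mul] using this
    have c2 : ConcaveOn ℝ (Set.Icc e1 e2) (fun _ => Real.log lc) :=
      concaveOn_const _ (convex_Icc _ _)
    have c3 : ConcaveOn ℝ (Set.Icc e1 e2)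
        (fun s => ∑ i ∈ (Finset.range κ).erase j, Real.log |s - z i|) := by
      refine concaveOn_finset_sum (convex_Icc _ _) _ _ fun i hi => ?_
      obtain ⟨hij, hirange⟩ := Finset.mem_erase.1 hi
      rcases hsep i (Finset.mem_range.1 hirange) hij with h | h
      · exact concaveOn_log_abs_sub (convex_Icc _ _)
          (Or.inl fun s hs => lt_of_lt_of_le h hs.1)
      · exact concaveOn_log_abs_sub (convex_Icc _ _)
          (Or.inr fun s hs => lt_of_le_of_lt hs.2 h)
    exact (c1.add c2).add c3
  -- endpoint values
  have hFe1 : F e1 = - Real.log (w - e1) := by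
    have := hlog e1 (left_mem_Icc.2 he12) (ne_of_lt h1)
    rw [hTe1, Real.log_one] at this
    rw [abs_sub_comm, abs_of_pos (sub_pos.2 h1)] at this
    linarith
  have hFe2 : F e2 = - Real.log (e2 - w) := by
    have := hlog e2 (right_mem_Icc.2 he12) (ne_of_gt h2)
    rw [hTe2, Real.log_one] at this
    rw [abs_of_pos (sub_pos.2 h2)] at this
    linarith
  -- F ≥ -log M on Icc
  have hFt : - Real.log M ≤ F t := by
    refine le_trans ?_ (concaveOn_icc_min_le he12 hFconc ht)
    rw [hFe1, hFe2]
    refine le_min (neg_le_neg ?_) (neg_le_neg ?_)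
    · exact Real.log_le_log (sub_pos.2 h1) (le_max_left _ _)
    · exact Real.log_le_log (sub_pos.2 h2) (le_max_right _ _)
  -- conclude
  have htw' : (0:ℝ) < |t - w| := by nlinarith [abs_nonneg (t - w)]
  have htne : t ≠ w := fun h => by simp [h] at htw'
  have hTpos : (0:ℝ) < |T.eval t| := by
    rw [habs t]
    have h1' : (0:ℝ) < |t| := abs_pos.2 (ne_of_gt (hpos t ht))
    have h2' : (0:ℝ) < |lc| := abs_pos.2 (ne_of_gt hlc)
    have h3' : (0:ℝ) < ∏ i ∈ Finset.range κ, |t - z i| := by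
      refine Finset.prod_pos fun i hi => abs_pos.2 ?_
      rcases eq_or_ne i j with rfl | hij
      · exact sub_ne_zero.2 htne
      · exact hfac i (Finset.mem_range.1 hi) hij t ht
    positivity
  have hlogt : Real.log (1/2) ≤ Real.log |T.eval t| := by
    rw [hlog t ht htne]
    have hlw : Real.log M - Real.log 2 ≤ Real.log |t - w| := by
      have : Real.log (M / 2) ≤ Real.log |t - w| :=
        Real.log_le_log (by positivity) (by linarith)
      rwa [Real.log_div (ne_of_gt hMp) two_ne_zero] at this
    have h12 : Real.log (1/2) = - Real.log 2 := by rw [one_div, Real.log_inv]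
    have hadd := add_le_add hFt hlw
    rw [h12]
    linarith [hadd]
  calc (1:ℝ)/2 = Real.exp (Real.log (1/2)) := (Real.exp_log (by norm_num)).symm
    _ ≤ Real.exp (Real.log |T.eval t|) := Real.exp_le_exp.2 hlogt
    _ = |T.eval t| := Real.exp_log hTpos

lemma exp_three_half_lt_five : Real.exp (3/2) < 5 := by
  have h := Real.exp_one_lt_d9
  have h3 : Real.exp 3 < 25 := by
    have : Real.exp 3 = (Real.exp 1) ^ 3 := by
      rw [← Real.exp_nat_mul]; norm_num
    rw [this]
    have h1 : Real.exp 1 ≤ 2.7182818286 := h.le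
    calc (Real.exp 1)^3 ≤ 2.7182818286^3 :=
          pow_le_pow_left₀ (Real.exp_pos 1).le h1 3
      _ < 25 := by norm_num
  have hsq : Real.exp (3/2) ^ 2 = Real.exp 3 := by
    rw [← Real.exp_nat_mul]; norm_num
  nlinarith [Real.exp_pos (3/2)]

set_option maxHeartbeats 1000000

/-- There is an absolute constant `c > 0` such that for integers `κ ≥ 2`,
`ν ≥ 20κ`, if `T` is the Chebyshev polynomial of the Müntz space
`span{x^ν, …, x^(ν+κ)}` on `[0,1]` normalized so `T(1) = 1` (i.e. `T = x^ν Q` with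
`deg Q ≤ κ`, `‖T‖_{[0,1]} = 1`, and `T` equioscillates at points
`1 = x_0 > … > x_κ > 0`), then the Lebesgue measure of
`{x ∈ [0,1] : |T(x)| ≥ 1/2}` is at least `c κ/ν`. -/
theorem stmt_13 : ∃ c : ℝ, 0 < c ∧ ∀ ν κ : ℕ, 2 ≤ κ → 20 * κ ≤ ν →
    ∀ T Q : Polynomial ℝ, Q.natDegree ≤ κ → T = X ^ ν * Q → T.eval 1 = 1 →
    (⨆ x : Set.Icc (0:ℝ) 1, |T.eval (x : ℝ)|) = 1 →
    (∃ x : ℕ → ℝ, x 0 = 1 ∧ (∀ i j : ℕ, i < j → j ≤ κ → x j < x i) ∧ 0 < x κ ∧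
      ∀ j ≤ κ, T.eval (x j) = (-1 : ℝ) ^ j) →
    ENNReal.ofReal (c * (κ : ℝ) / (ν : ℝ)) ≤
      volume {x : ℝ | x ∈ Set.Icc (0:ℝ) 1 ∧ 1/2 ≤ |T.eval x|} := by
  classical
  refine ⟨1/20, by norm_num, ?_⟩
  intro ν κ hκ hν T Q hQdeg hTQ hT1 hsup hosc
  obtain ⟨x, hx0, hxdec, hxκpos, hxval⟩ := hosc
  have hκ0 : 0 < κ := by omega
  have hν0 : 0 < ν := by omega
  have hνR : (0:ℝ) < ν := by exact_mod_cast hν0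
  have hκR : (0:ℝ) < κ := by exact_mod_cast hκ0
  have hνκ : 20 * (κ:ℝ) ≤ ν := by exact_mod_cast hν
  -- monotonicity facts
  have hxmono : ∀ i j : ℕ, i ≤ j → j ≤ κ → x j ≤ x i := by
    intro i j hij hj
    rcases eq_or_lt_of_le hij with rfl | h
    · exact le_rfl
    · exact (hxdec i j h hj).le
  have hxle1 : ∀ j, j ≤ κ → x j ≤ 1 := fun j hj => hx0 ▸ hxmono 0 j (Nat.zero_le j) hj
  have hxpos : ∀ j, j ≤ κ → 0 < x j := fun j hj => lt_of_lt_of_le hxκpos (hxmono j κ hj le_rfl)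
  have hxκlt1 : x κ < 1 := hx0 ▸ hxdec 0 κ hκ0 le_rfl
  -- T basics
  have hTeval : ∀ t : ℝ, T.eval t = t ^ ν * Q.eval t := by
    intro t; rw [hTQ]; simp
  have hQ1 : Q.eval 1 = 1 := by
    have := hT1; rw [hTeval 1, one_pow, one_mul] at this; exact this
  have hQne : Q ≠ 0 := fun h => by simp [h] at hQ1
  -- sup bound
  have hT_le : ∀ t ∈ Set.Icc (0:ℝ) 1, |T.eval t| ≤ 1 := by
    intro t ht
    have hbdd : BddAbove (Set.range fun s : Set.Icc (0:ℝ) 1 => |T.eval (s:ℝ)|) := by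
      have himg := ((isCompact_Icc : IsCompact (Set.Icc (0:ℝ) 1)).image_of_continuousOn
        ((T.continuous.abs).continuousOn)).bddAbove
      rwa [Set.image_eq_range (fun t : ℝ => |T.eval t|) (Set.Icc (0:ℝ) 1)] at himg
    have := le_ciSup hbdd (⟨t, ht⟩ : Set.Icc (0:ℝ) 1)
    rwa [hsup] at this
  -- roots between alternation points
  have hroot_ex : ∀ j, j < κ → ∃ w, w ∈ Set.Ioo (x (j+1)) (x j) ∧ T.eval w = 0 := by
    intro j hj
    have hlt : x (j+1) < x j := hxdec j (j+1) (lt_add_one j) (by omega)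
    have hcont' : ContinuousOn (fun t => (-1:ℝ)^j * T.eval t) (Set.Icc (x (j+1)) (x j)) :=
      (continuous_const.mul T.continuous).continuousOn
    have hmem : (0:ℝ) ∈ Set.Ioo ((fun t => (-1:ℝ)^j * T.eval t) (x (j+1)))
        ((fun t => (-1:ℝ)^j * T.eval t) (x j)) := by
      simp only
      rw [hxval (j+1) (by omega), hxval j (by omega)]
      constructor
      · have : (-1:ℝ)^j * (-1:ℝ)^(j+1) = -1 := by
          rw [← pow_add]
          exact Odd.neg_one_pow ⟨j, by ring⟩
        rw [this]; norm_num
      · have : (-1:ℝ)^j * (-1:ℝ)^j = 1 := by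
          rw [← pow_add]
          exact Even.neg_one_pow ⟨j, rfl⟩
        rw [this]; norm_num
    obtain ⟨w, hw, hweq⟩ := intermediate_value_Ioo hlt.le hcont' hmem
    refine ⟨w, hw, ?_⟩
    have hne : ((-1:ℝ)^j) ≠ 0 := by
      simp [pow_ne_zero]
    simpa [hne] using hweq
  choose! z hzmem hzval using hroot_ex
  have hz_ub : ∀ j, j < κ → z j < x j := fun j hj => (hzmem j hj).2
  have hz_lb : ∀ j, j < κ → x (j+1) < z j := fun j hj => (hzmem j hj).1
  have hzκ : ∀ j, j < κ → x κ < z j := fun j hj =>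
    lt_of_le_of_lt (hxmono (j+1) κ (by omega) le_rfl) (hz_lb j hj)
  have hzpos : ∀ j, j < κ → 0 < z j := fun j hj => lt_trans hxκpos (hzκ j hj)
  have hz_lt1 : ∀ j, j < κ → z j < 1 := fun j hj =>
    lt_of_lt_of_le (hz_ub j hj) (hxle1 j hj.le)
  have hQz : ∀ j, j < κ → Q.IsRoot (z j) := by
    intro j hj
    have h0 := hzval j hj
    rw [hTeval] at h0
    have : (z j) ^ ν ≠ 0 := pow_ne_zero _ (ne_of_gt (hzpos j hj))
    exact (mul_eq_zero.1 h0).resolve_left this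
  -- multiset of roots
  set M : Multiset ℝ := (Finset.range κ).val.map z with hMdef
  have hzinj : ∀ i j : ℕ, i < j → j < κ → z j < z i := by
    intro i j hij hj
    calc z j < x j := hz_ub j hj
      _ ≤ x (i+1) := hxmono (i+1) j (by omega) hj.le
      _ < z i := hz_lb i (by omega)
  have hMnodup : M.Nodup := by
    refine Multiset.Nodup.map_on ?_ (Finset.range κ).nodup
    intro i hi j hj hzij
    rcases lt_trichotomy i j with h | h | h
    · exact absurd hzij (ne_of_gt (hzinj i j h (Finset.mem_range.1 hj)))
    · exact h
    · exact absurd hzij (ne_of_lt (hzinj j i h (Finset.mem_range.1 hi)))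
  have hMle : M ≤ Q.roots := by
    rw [Multiset.le_iff_subset hMnodup]
    intro a ha
    obtain ⟨i, hi, rfl⟩ := Multiset.mem_map.1 ha
    exact Polynomial.mem_roots'.2 ⟨hQne, hQz i (Finset.mem_range.1 hi)⟩
  have hMcard : Multiset.card M = κ := by simp [hMdef]
  have hroots_eq : Q.roots = M := by
    refine (Multiset.eq_of_le_of_card_le hMle ?_).symm
    rw [hMcard]
    exact (Q.card_roots').trans hQdeg
  have hQnat : Q.natDegree = κ := by
    refine le_antisymm hQdeg ?_
    calc κ = Multiset.card Q.roots := by rw [hroots_eq, hMcard]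
      _ ≤ Q.natDegree := Q.card_roots'
  set lc := Q.leadingCoeff with hlcdef
  have hQfact := Polynomial.C_leadingCoeff_mul_prod_multiset_X_sub_C
    (p := Q) (by rw [hroots_eq, hMcard, hQnat])
  have hQeval : ∀ t : ℝ, Q.eval t = lc * ∏ i ∈ Finset.range κ, (t - z i) := by
    intro t
    conv_lhs => rw [← hQfact]
    rw [eval_mul, eval_C, hroots_eq, hMdef, Multiset.map_map, Polynomial.eval_multiset_prod,
      Multiset.map_map]
    congr 1
    rw [Finset.prod_eq_multiset_prod]
    congr 1
    apply Multiset.map_congr rfl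
    intro i _
    simp
  have hTeval' : ∀ t : ℝ, T.eval t = t ^ ν * (lc * ∏ i ∈ Finset.range κ, (t - z i)) :=
    fun t => by rw [hTeval, hQeval]
  have hQ1' : lc * ∏ i ∈ Finset.range κ, (1 - z i) = 1 := by rw [← hQeval]; exact hQ1
  have hprod1pos : 0 < ∏ i ∈ Finset.range κ, (1 - z i) :=
    Finset.prod_pos fun i hi => sub_pos.2 (hz_lt1 i (Finset.mem_range.1 hi))
  have hlcpos : 0 < lc := by nlinarith [hQ1', hprod1pos]
  -- step B2 : the window is wide
  set l : ℝ := 1 - x κ with hldef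
  have hlpos : 0 < l := sub_pos.2 hxκlt1
  have hB2 : (κ:ℝ) / (5*ν) ≤ l := by
    by_contra hcon
    push_neg at hcon
    set d : ℝ := (κ:ℝ)/ν with hddef
    have hdpos : 0 < d := div_pos hκR hνR
    have hd20 : d ≤ 1/20 := by
      rw [hddef, div_le_div_iff₀ hνR (by norm_num)]
      linarith
    have hld : l < d/5 := by
      have heq : (κ:ℝ)/(5*ν) = d/5 := by rw [hddef]; ring
      rw [← heq]; exact hcon
    set y : ℝ := x κ - d with hydef
    have hxκeq : x κ = 1 - l := by rw [hldef]; ring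
    have hylb : 1 - (6/5)*d < y := by
      rw [hydef, hxκeq]; linarith
    have hypos : 0 < y := by linarith [hylb, hd20]
    have hylt1 : y < 1 := by
      rw [hydef]; linarith [hxκlt1, hdpos]
    have hzy : ∀ i, i < κ → d ≤ z i - y := by
      intro i hi
      have := hzκ i hi
      rw [hydef]; linarith
    -- lower bound for |Q.eval y|
    have hQyabs : |Q.eval y| = lc * ∏ i ∈ Finset.range κ, |y - z i| := by
      rw [hQeval, abs_mul, Finset.abs_prod, abs_of_pos hlcpos]
    have hprod_d : d ^ κ ≤ ∏ i ∈ Finset.range κ, |y - z i| := by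
      calc d ^ κ = ∏ _i ∈ Finset.range κ, d := by
            rw [Finset.prod_const, Finset.card_range]
        _ ≤ ∏ i ∈ Finset.range κ, |y - z i| := by
            refine Finset.prod_le_prod (fun i _ => hdpos.le) ?_
            intro i hi
            rw [abs_sub_comm, abs_of_pos (by linarith [hzy i (Finset.mem_range.1 hi)])]
            exact hzy i (Finset.mem_range.1 hi)
    have hlcl : 1 ≤ lc * l ^ κ := by
      calc (1:ℝ) = lc * ∏ i ∈ Finset.range κ, (1 - z i) := hQ1'.symm
        _ ≤ lc * l ^ κ := by
            refine mul_le_mul_of_nonneg_left ?_ hlcpos.le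
            calc ∏ i ∈ Finset.range κ, (1 - z i) ≤ ∏ _i ∈ Finset.range κ, l := by
                  refine Finset.prod_le_prod ?_ ?_
                  · intro i hi; linarith [hz_lt1 i (Finset.mem_range.1 hi)]
                  · intro i hi
                    have := hzκ i (Finset.mem_range.1 hi)
                    rw [hldef]; linarith
              _ = l ^ κ := by rw [Finset.prod_const, Finset.card_range]
    have h5κ : (5:ℝ)^κ ≤ |Q.eval y| := by
      have hdl : (5:ℝ) ≤ d / l := by
        rw [le_div_iff₀ hlpos]; linarith
      calc (5:ℝ)^κ ≤ (d/l)^κ := pow_le_pow_left₀ (by norm_num) hdl κ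
        _ ≤ (lc * l^κ) * (d/l)^κ := by
            nlinarith [pow_pos (div_pos hdpos hlpos) κ, hlcl]
        _ = lc * d^κ := by
            rw [mul_assoc, ← mul_pow]
            congr 2
            field_simp
        _ ≤ lc * ∏ i ∈ Finset.range κ, |y - z i| :=
            mul_le_mul_of_nonneg_left hprod_d hlcpos.le
        _ = |Q.eval y| := hQyabs.symm
    -- upper bound
    have hTy : |T.eval y| ≤ 1 := hT_le y ⟨hypos.le, hylt1.le⟩
    have hTyeq : |T.eval y| = y^ν * |Q.eval y| := by
      rw [hTeval, abs_mul, abs_pow, abs_of_pos hypos]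
    have hup : y^ν * (5:ℝ)^κ ≤ 1 := by
      calc y^ν * (5:ℝ)^κ ≤ y^ν * |Q.eval y| := by
            exact mul_le_mul_of_nonneg_left h5κ (pow_nonneg hypos.le ν)
        _ = |T.eval y| := hTyeq.symm
        _ ≤ 1 := hTy
    -- but y^ν * 5^κ > 1
    set u : ℝ := (6/5)*d with hudef
    have hu6 : u ≤ 6/100 := by rw [hudef]; linarith
    have hupos : 0 < u := by rw [hudef]; linarith
    have h1u : 0 < 1 - u := by linarith
    have hyu : 1 - u ≤ y := by linarith [hylb]
    have h2 : (1-u)⁻¹ ≤ Real.exp (u/(1-u)) := by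
      have h := Real.add_one_le_exp (u/(1-u))
      have heq : u/(1-u) + 1 = (1-u)⁻¹ := by field_simp; ring
      linarith [h, heq.symm.le, heq.le]
    have hexp1 : Real.exp (-(u/(1-u))) ≤ 1 - u := by
      rw [Real.exp_neg, inv_le_comm₀ (Real.exp_pos _) h1u]
      exact h2
    have hyν : Real.exp ((ν:ℝ) * -(u/(1-u))) ≤ y^ν := by
      rw [Real.exp_nat_mul]
      exact pow_le_pow_left₀ (Real.exp_pos _).le (hexp1.trans hyu) ν
    have h5exp : Real.exp ((3/2) * (κ:ℝ)) ≤ (5:ℝ)^κ := by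
      rw [show ((3:ℝ)/2)*(κ:ℝ) = (κ:ℝ)*(3/2) by ring, Real.exp_nat_mul]
      exact pow_le_pow_left₀ (Real.exp_pos _).le exp_three_half_lt_five.le κ
    have hνu : (ν:ℝ) * (u/(1-u)) < (3/2)*κ := by
      have hνu' : (ν:ℝ) * u = (6/5)*κ := by
        rw [hudef, hddef]
        field_simp
      have heq2 : (ν:ℝ) * (u/(1-u)) = ((6/5)*κ)/(1-u) := by
        rw [mul_div_assoc', hνu']
      rw [heq2]
      have hden : (94:ℝ)/100 ≤ 1 - u := by linarith
      have : ((6/5)*(κ:ℝ))/(1-u) ≤ ((6/5)*κ)/(94/100) := by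
        apply div_le_div_of_nonneg_left (by positivity) (by norm_num) hden
      have hnum : ((6/5)*(κ:ℝ))/(94/100) < (3/2)*κ := by
        rw [div_lt_iff₀ (by norm_num)]
        nlinarith [hκR]
      linarith
    have hbig : (1:ℝ) < y^ν * 5^κ := by
      calc (1:ℝ) = Real.exp 0 := Real.exp_zero.symm
        _ < Real.exp ((ν:ℝ) * -(u/(1-u)) + (3/2)*κ) := by
            rw [Real.exp_lt_exp]
            have : (ν:ℝ) * -(u/(1-u)) = -((ν:ℝ) * (u/(1-u))) := by ring
            rw [this]
            linarith [hνu]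
        _ = Real.exp ((ν:ℝ) * -(u/(1-u))) * Real.exp ((3/2)*(κ:ℝ)) := Real.exp_add _ _
        _ ≤ y^ν * 5^κ :=
            mul_le_mul hyν h5exp (Real.exp_pos _).le (pow_nonneg hypos.le ν)
    linarith [hup, hbig]
  -- Step B1 : intervals where |T| ≥ 1/2
  set E : ℕ → Set ℝ := fun j =>
    if x j - z j ≤ z j - x (j+1) then Set.Ioo (x (j+1)) (z j - (z j - x (j+1))/2)
    else Set.Ioo (z j + (x j - z j)/2) (x j) with hEdef
  have hEsub : ∀ j, j < κ → E j ⊆ Set.Ioo (x (j+1)) (x j) := by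
    intro j hj t ht
    have hp : 0 < z j - x (j+1) := sub_pos.2 (hz_lb j hj)
    have hq : 0 < x j - z j := sub_pos.2 (hz_ub j hj)
    simp only [hEdef] at ht
    split_ifs at ht with hc
    · exact ⟨ht.1, by linarith [ht.2]⟩
    · exact ⟨by linarith [ht.1], ht.2⟩
  have hEvol : ∀ j, j < κ → ENNReal.ofReal ((x j - x (j+1))/4) ≤ volume (E j) := by
    intro j hj
    have hp : 0 < z j - x (j+1) := sub_pos.2 (hz_lb j hj)
    have hq : 0 < x j - z j := sub_pos.2 (hz_ub j hj)
    simp only [hEdef]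
    split_ifs with hc
    · rw [Real.volume_Ioo]
      apply ENNReal.ofReal_le_ofReal
      linarith
    · rw [Real.volume_Ioo]
      apply ENNReal.ofReal_le_ofReal
      linarith
  have hEmeas : ∀ j ∈ Finset.range κ, MeasurableSet (E j) := by
    intro j _
    simp only [hEdef]
    split_ifs <;> exact measurableSet_Ioo
  have hEdisj : (↑(Finset.range κ) : Set ℕ).PairwiseDisjoint E := by
    intro i hi j hj hij
    have hi' : i < κ := Finset.mem_range.1 (Finset.mem_coe.1 hi)
    have hj' : j < κ := Finset.mem_range.1 (Finset.mem_coe.1 hj)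
    refine Set.disjoint_left.2 fun a hai haj => ?_
    have h1 := hEsub i hi' hai
    have h2 := hEsub j hj' haj
    rcases lt_or_gt_of_ne hij with h | h
    · have : x j ≤ x (i+1) := hxmono (i+1) j (by omega) hj'.le
      linarith [h1.1, h2.2]
    · have : x i ≤ x (j+1) := hxmono (j+1) i (by omega) hi'.le
      linarith [h1.2, h2.1]
  have hsubS : ∀ j, j < κ →
      E j ⊆ {t : ℝ | t ∈ Set.Icc (0:ℝ) 1 ∧ 1/2 ≤ |T.eval t|} := by
    intro j hj t ht
    have hIoo := hEsub j hj ht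
    have hp : 0 < z j - x (j+1) := sub_pos.2 (hz_lb j hj)
    have hq : 0 < x j - z j := sub_pos.2 (hz_ub j hj)
    have ht01 : t ∈ Set.Icc (0:ℝ) 1 :=
      ⟨le_of_lt (lt_trans (hxpos (j+1) (by omega)) hIoo.1),
       le_trans hIoo.2.le (hxle1 j hj.le)⟩
    refine ⟨ht01, ?_⟩
    have hsep : ∀ i, i < κ → i ≠ j → z i < x (j+1) ∨ x j < z i := by
      intro i hi hij
      rcases lt_or_gt_of_ne hij with h | h
      · right
        exact lt_of_le_of_lt (hxmono (i+1) j (by omega) hj.le) (hz_lb i hi)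
      · left
        exact lt_of_lt_of_le (hz_ub i hi) (hxmono (j+1) i (by omega) hi.le)
    have hTe1 : |T.eval (x (j+1))| = 1 := by
      rw [hxval (j+1) (by omega)]
      simp
    have hTe2 : |T.eval (x j)| = 1 := by
      rw [hxval j hj.le]
      simp
    refine key_interval ν κ j lc z T (x (j+1)) (x j) hlcpos hTeval' hj
      (hxpos (j+1) (by omega)) (hz_lb j hj) (hz_ub j hj) hsep hTe1 hTe2
      ⟨hIoo.1.le, hIoo.2.le⟩ ?_
    simp only [hEdef] at ht
    split_ifs at ht with hc
    · have habs : |t - z j| = z j - t := by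
        rw [abs_sub_comm]
        exact abs_of_pos (by linarith [ht.2])
      rw [habs, max_eq_left (by linarith)]
      linarith [ht.2]
    · have habs : |t - z j| = t - z j := abs_of_pos (by linarith [ht.1])
      rw [habs, max_eq_right (by linarith)]
      linarith [ht.1]
  have hsum : ∑ j ∈ Finset.range κ, (x j - x (j+1)) = 1 - x κ := by
    rw [Finset.sum_range_sub' x κ, hx0]
  calc ENNReal.ofReal (1/20 * (κ:ℝ) / (ν:ℝ))
      ≤ ENNReal.ofReal (∑ j ∈ Finset.range κ, (x j - x (j+1))/4) := by
        apply ENNReal.ofReal_le_ofReal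
        rw [← Finset.sum_div, hsum]
        have heq : (1:ℝ)/20 * κ / ν = ((κ:ℝ)/(5*ν))/4 := by ring
        rw [heq]
        have hl' : (1:ℝ) - x κ = l := rfl
        linarith [hB2]
    _ = ∑ j ∈ Finset.range κ, ENNReal.ofReal ((x j - x (j+1))/4) := by
        rw [ENNReal.ofReal_sum_of_nonneg]
        intro j hj
        have := hxdec j (j+1) (lt_add_one j) (by
          have := Finset.mem_range.1 hj; omega)
        linarith
    _ ≤ ∑ j ∈ Finset.range κ, volume (E j) :=
        Finset.sum_le_sum fun j hj => hEvol j (Finset.mem_range.1 hj)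
    _ = volume (⋃ j ∈ Finset.range κ, E j) := (measure_biUnion_finset hEdisj hEmeas).symm
    _ ≤ volume {t : ℝ | t ∈ Set.Icc (0:ℝ) 1 ∧ 1/2 ≤ |T.eval t|} := by
        apply measure_mono
        intro a ha
        simp only [Set.mem_iUnion] at ha
        obtain ⟨j, hj, haj⟩ := ha
        exact hsubS j (Finset.mem_range.1 hj) haj
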